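/- Let C be a locally small category in which all morphisms are mono, and let A be an object of C. If the Ramsey degree t_C(A) is finite, then t_C(A) ≥ |Aut(A)|; in particular, if t_C(A) = 1 then A is rigid (its only automorphism is the identity). -/

import Mathlib

open CategoryTheory

universe v u v' u'

def RamseyArrow (C : Type u) [Category.{v} C] (A B Z : C) (k t : ℕ) : Prop :=
  ∀ χ : (A ⟶ Z) → Fin k, ∃ w : B ⟶ Z,
    (Set.range fun f : A ⟶ B => χ (f ≫ w)).ncard ≤ t

noncomputable def ramseyDeg (C : Type u) [Category.{v} C] (A : C) : ℕ∞ :=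
  sInf {n : ℕ∞ | ∃ m : ℕ, n = (m : ℕ∞) ∧ 1 ≤ m ∧
    ∀ k : ℕ, 2 ≤ k → ∀ B : C, ∃ Z : C, RamseyArrow C A B Z k m}

section greedy

variable {V : Type*} (H : SimpleGraph V)

lemma greedy_coloring (k : ℕ) (hk0 : 0 < k)
    (hdeg : ∀ v : V, ∃ N : Finset V, (∀ u, H.Adj v u → u ∈ N) ∧ N.card < k)
    (t : Finset V) :
    ∃ c : V → Fin k, ∀ x ∈ t, ∀ y ∈ t, H.Adj x y → c x ≠ c y := by
  classical
  induction t using Finset.induction with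
  | empty => exact ⟨fun _ => ⟨0, hk0⟩, by simp⟩
  | @insert a t ha ih =>
    obtain ⟨c, hc⟩ := ih
    obtain ⟨N, hN, hNcard⟩ := hdeg a
    have himg : (N.image c).card < k := lt_of_le_of_lt Finset.card_image_le hNcard
    obtain ⟨i, hi⟩ : ∃ i : Fin k, i ∉ N.image c := by
      by_contra h
      push_neg at h
      have hsub : (Finset.univ : Finset (Fin k)) ⊆ N.image c := fun i _ => h i
      have := Finset.card_le_card hsub
      simp [Finset.card_univ] at this
      omega
    refine ⟨Function.update c a i, ?_⟩
    have upd : ∀ z, Function.update c a i z = if z = a then i else c z :=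
      fun z => Function.update_apply c a i z
    intro x hx y hy hadj heq
    rw [upd x, upd y] at heq
    by_cases hxa : x = a <;> by_cases hya : y = a
    · exact H.ne_of_adj hadj (hxa.trans hya.symm)
    · rw [if_pos hxa, if_neg hya] at heq
      have hyN : y ∈ N := hN y (hxa ▸ hadj)
      exact hi (by rw [heq]; exact Finset.mem_image_of_mem c hyN)
    · rw [if_neg hxa, if_pos hya] at heq
      have hxN : x ∈ N := hN x (hya ▸ hadj.symm)
      exact hi (by rw [← heq]; exact Finset.mem_image_of_mem c hxN)
    · rw [if_neg hxa, if_neg hya] at heq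
      have hxt : x ∈ t := (Finset.mem_insert.mp hx).resolve_left hxa
      have hyt : y ∈ t := (Finset.mem_insert.mp hy).resolve_left hya
      exact hc x hxt y hyt hadj heq

lemma exists_global_coloring (k : ℕ) (hk0 : 0 < k)
    (hdeg : ∀ v : V, ∃ N : Finset V, (∀ u, H.Adj v u → u ∈ N) ∧ N.card < k) :
    ∃ c : V → Fin k, ∀ x y, H.Adj x y → c x ≠ c y := by
  classical
  obtain ⟨f⟩ := H.nonempty_hom_of_forall_finite_subgraph_hom
    (F := SimpleGraph.completeGraph (Fin k)) (fun G' hfin =>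
      let cc := (greedy_coloring H k hk0 hdeg hfin.toFinset).choose
      have hcc := (greedy_coloring H k hk0 hdeg hfin.toFinset).choose_spec
      ⟨fun v => cc v.1, fun {u v} h =>
        hcc _ (hfin.mem_toFinset.mpr u.2) _ (hfin.mem_toFinset.mpr v.2) (G'.adj_sub h)⟩)
  exact ⟨f, fun x y h => f.map_rel h⟩

end greedy

section groupcol

variable {G : Type*} [Group G]

def transGraph (s : Finset G) : SimpleGraph G where
  Adj x y := x ≠ y ∧ ∃ a ∈ s, ∃ b ∈ s, y = x * a⁻¹ * b
  symm := ⟨by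
    rintro x y ⟨hxy, a, ha, b, hb, rfl⟩
    exact ⟨hxy.symm, b, hb, a, ha, by group⟩⟩
  loopless := ⟨fun x h => h.1 rfl⟩

lemma exists_group_coloring (s : Finset G) :
    ∃ c : G → Fin (s.card * s.card + 2),
      ∀ γ : G, ∀ a ∈ s, ∀ b ∈ s, a ≠ b → c (γ * a) ≠ c (γ * b) := by
  classical
  obtain ⟨c, hc⟩ := exists_global_coloring (transGraph s) (s.card * s.card + 2)
    (by omega) (fun v => by
      refine ⟨(s ×ˢ s).image (fun p => v * p.1⁻¹ * p.2), ?_, ?_⟩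
      · rintro u ⟨-, a, ha, b, hb, rfl⟩
        exact Finset.mem_image.mpr ⟨(a, b), Finset.mem_product.mpr ⟨ha, hb⟩, rfl⟩
      · calc ((s ×ˢ s).image (fun p => v * p.1⁻¹ * p.2)).card
            ≤ (s ×ˢ s).card := Finset.card_image_le
          _ = s.card * s.card := Finset.card_product s s
          _ < s.card * s.card + 2 := by omega)
  refine ⟨c, fun γ a ha b hb hab => ?_⟩
  refine hc _ _ ⟨?_, a, ha, b, hb, by group⟩
  intro h
  exact hab (mul_left_cancel h)

end groupcol

section main

variable {C : Type u} [Category.{v} C]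

lemma card_le_of_ramsey (hmono : ∀ {X Y : C} (f : X ⟶ Y), Mono f) (A : C)
    (m : ℕ) (hR : ∀ k : ℕ, 2 ≤ k → ∀ B : C, ∃ Z : C, RamseyArrow C A B Z k m)
    (s : Finset (Aut A)) : s.card ≤ m := by
  classical
  obtain ⟨c, hc⟩ := exists_group_coloring s
  obtain ⟨Z, hZ⟩ := hR (s.card * s.card + 2) (by omega) A
  -- setoid on A ⟶ Z given by the Aut A action by precomposition
  let r : (A ⟶ Z) → (A ⟶ Z) → Prop := fun f g => ∃ α : Aut A, f = α.hom ≫ g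
  have hrefl : ∀ f, r f f := fun f => ⟨1, by rw [show (1 : Aut A).hom = 𝟙 A from rfl, Category.id_comp]⟩
  have hsymm : ∀ {f g}, r f g → r g f := by
    rintro f g ⟨α, rfl⟩
    exact ⟨α⁻¹, (Iso.inv_hom_id_assoc (α : A ≅ A) g).symm⟩
  have htrans : ∀ {f g h}, r f g → r g h → r f h := by
    rintro f g h ⟨α, rfl⟩ ⟨β, rfl⟩
    exact ⟨β * α, (Category.assoc (α : A ≅ A).hom (β : A ≅ A).hom h).symm⟩
  let sd : Setoid (A ⟶ Z) := ⟨r, ⟨hrefl, hsymm, htrans⟩⟩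
  let rep : (A ⟶ Z) → (A ⟶ Z) := fun f => (Quotient.mk sd f).out
  have hrep_spec : ∀ f, ∃ α : Aut A, f = α.hom ≫ rep f := by
    intro f
    have : r (rep f) f := Quotient.exact (Quotient.out_eq (Quotient.mk sd f))
    exact hsymm this
  have hrep_eq : ∀ f g, r f g → rep f = rep g := by
    intro f g h
    simp only [rep]
    congr 1
    exact Quotient.sound h
  let σ : (A ⟶ Z) → Aut A := fun f => (hrep_spec f).choose
  have hσ : ∀ f, f = (σ f).hom ≫ rep f := fun f => (hrep_spec f).choose_spec
  -- the coloring
  let χ : (A ⟶ Z) → Fin (s.card * s.card + 2) := fun f => c (σ f)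
  obtain ⟨w, hw⟩ := hZ χ
  -- key computation: σ (α.hom ≫ w) = σ w * α
  have key : ∀ α : Aut A, σ (α.hom ≫ w) = σ w * α := by
    intro α
    have h1 : rep (α.hom ≫ w) = rep w := hrep_eq _ _ ⟨α, rfl⟩
    have h2 : (σ (α.hom ≫ w)).hom ≫ rep (α.hom ≫ w) = (σ w * α).hom ≫ rep w := by
      rw [← hσ (α.hom ≫ w)]; exact (congrArg (α.hom ≫ ·) (hσ w)).trans (Category.assoc _ _ _).symm
    rw [h1] at h2
    have h3 := (hmono (rep w)).right_cancellation _ _ h2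
    ext1
    exact h3
  -- injectivity on s
  have hinj : Set.InjOn (fun α : Aut A => χ (α.hom ≫ w)) s := by
    intro a ha b hb hab
    by_contra hne
    exact (by simpa only [χ, key] using hc (σ w) a ha b hb hne :
      χ (a.hom ≫ w) ≠ χ (b.hom ≫ w)) hab
  have hsubset : (fun α : Aut A => χ (α.hom ≫ w)) '' s ⊆
      Set.range fun f : A ⟶ A => χ (f ≫ w) := by
    rintro x ⟨α, -, rfl⟩
    exact ⟨α.hom, rfl⟩
  calc s.card = ((fun α : Aut A => χ (α.hom ≫ w)) '' s).ncard := by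
        rw [Set.ncard_image_of_injOn hinj, Set.ncard_coe_finset]
    _ ≤ (Set.range fun f : A ⟶ A => χ (f ≫ w)).ncard :=
        Set.ncard_le_ncard hsubset (Set.range _).toFinite
    _ ≤ m := hw

end main

theorem stmt1 {C : Type u} [Category.{v} C]
    (hmono : ∀ {X Y : C} (f : X ⟶ Y), Mono f) (A : C)
    (hfin : ramseyDeg C A ≠ ⊤) :
    Finite (Aut A) ∧ (Nat.card (Aut A) : ℕ∞) ≤ ramseyDeg C A ∧
    (ramseyDeg C A = 1 → ∀ α : Aut A, α = 1) := by
  classical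
  set S := {n : ℕ∞ | ∃ m : ℕ, n = (m : ℕ∞) ∧ 1 ≤ m ∧
    ∀ k : ℕ, 2 ≤ k → ∀ B : C, ∃ Z : C, RamseyArrow C A B Z k m} with hS
  have hne : S.Nonempty := by
    by_contra h
    rw [Set.not_nonempty_iff_eq_empty] at h
    apply hfin
    rw [ramseyDeg, ← hS, h, sInf_empty]
  have hmem : sInf S ∈ S := csInf_mem hne
  obtain ⟨m, hm_eq, hm1, hmR⟩ := hmem
  have hdeg : ramseyDeg C A = (m : ℕ∞) := by rw [ramseyDeg, ← hS, hm_eq]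
  have hbound : ∀ s : Finset (Aut A), s.card ≤ m :=
    card_le_of_ramsey hmono A m hmR
  have hFin : Finite (Aut A) := by
    by_contra h
    rw [not_finite_iff_infinite] at h
    obtain ⟨s, hs⟩ := Infinite.exists_subset_card_eq (Aut A) (m + 1)
    have := hbound s
    omega
  refine ⟨hFin, ?_, ?_⟩
  · haveI := Fintype.ofFinite (Aut A)
    have : Nat.card (Aut A) ≤ m := by
      rw [Nat.card_eq_fintype_card, ← Finset.card_univ]
      exact hbound _
    rw [hdeg]
    exact_mod_cast this
  · intro h1 α
    rw [hdeg] at h1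
    have hm : m = 1 := by exact_mod_cast h1
    haveI := Fintype.ofFinite (Aut A)
    have h2 : ({α, 1} : Finset (Aut A)).card ≤ 1 := hm ▸ hbound {α, 1}
    by_contra hne
    rw [Finset.card_insert_of_notMem (by simpa using hne)] at h2
    simp at h2
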